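/- For every integer t ≥ 12, the number S(t) of linear subspaces of the vector space GF(2)^t satisfies S(t) ≤ 2^{t(t+1)/4}. -/

import Mathlib

open Module Submodule

section Counting
variable {K V : Type*} [Field K] [AddCommGroup V] [Module K V] [Fintype K] [Finite V]

/-- transfer linear independence subtype along a linear equiv -/
def liEquiv {N : Type*} [AddCommGroup N] [Module K N] (e : V ≃ₗ[K] N) (k : ℕ) :
    { v : Fin k → V // LinearIndependent K v } ≃ { u : Fin k → N // LinearIndependent K u } where
  toFun v := ⟨(e : V →ₗ[K] N) ∘ v.1, v.2.map' _ e.ker⟩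
  invFun u := ⟨(e.symm : N →ₗ[K] V) ∘ u.1, u.2.map' _ e.symm.ker⟩
  left_inv v := by ext i; simp
  right_inv u := by ext i; simp

noncomputable def fiberEquiv (k : ℕ) (W : Submodule K V) (hW : finrank K W = k) :
    { v : { v : Fin k → V // LinearIndependent K v } // Submodule.span K (Set.range v.1) = W } ≃
      { u : Fin k → W // LinearIndependent K u } where
  toFun v := ⟨fun i => ⟨v.1.1 i, by have h := subset_span (R := K) (s := Set.range v.1.1) (Set.mem_range_self i); rwa [v.2] at h⟩, by
    apply LinearIndependent.of_comp W.subtype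
    convert v.1.2
    rfl⟩
  invFun u := ⟨⟨fun i => (u.1 i : V), u.2.map' W.subtype W.ker_subtype⟩, by
    have : Module.Finite K W := Module.Finite.of_finite
    have hs : span K (Set.range u.1) = ⊤ :=
      u.2.span_eq_top_of_card_eq_finrank' (by simp [hW])
    have : span K (Set.range fun i => ((u.1 i : V))) = Submodule.map W.subtype (span K (Set.range u.1)) := by
      rw [Submodule.map_span]
      congr 1
      ext x
      simp [Set.range_comp]
    rw [this, hs, Submodule.map_subtype_top]⟩
  left_inv v := by ext i; rfl
  right_inv u := by ext i; rfl

theorem stratum_card (k : ℕ) :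
    Nat.card { v : Fin k → V // LinearIndependent K v } =
      Nat.card { W : Submodule K V // finrank K W = k } *
        Nat.card { u : Fin k → (Fin k → K) // LinearIndependent K u } := by
  classical
  have : Module.Finite K V := Module.Finite.of_finite
  cases nonempty_fintype V
  let f : { v : Fin k → V // LinearIndependent K v } → { W : Submodule K V // finrank K W = k } :=
    fun v => ⟨span K (Set.range v.1), by rw [finrank_span_eq_card v.2, Fintype.card_fin]⟩
  letI : Fintype { v : Fin k → V // LinearIndependent K v } := Fintype.ofFinite _
  letI : Fintype (Submodule K V) := Fintype.ofFinite _
  letI : Fintype { W : Submodule K V // finrank K W = k } := Fintype.ofFinite _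
  letI : Fintype { u : Fin k → (Fin k → K) // LinearIndependent K u } := Fintype.ofFinite _
  simp only [Nat.card_eq_fintype_card]
  rw [Fintype.card_congr (Equiv.sigmaFiberEquiv f).symm, Fintype.card_sigma]
  have hfib : ∀ W : { W : Submodule K V // finrank K W = k },
      Fintype.card { v // f v = W } =
        Fintype.card { u : Fin k → (Fin k → K) // LinearIndependent K u } := by
    intro W
    have e1 : { v // f v = W } ≃
        { v : { v : Fin k → V // LinearIndependent K v } //
          Submodule.span K (Set.range v.1) = W.1 } :=
      Equiv.subtypeEquivRight (fun v => by simp [f, Subtype.ext_iff])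
    have e3 : (W.1 : Submodule K V) ≃ₗ[K] (Fin k → K) := by
      have : Module.Finite K W.1 := Module.Finite.of_finite
      exact LinearEquiv.ofFinrankEq _ _ (by simp [W.2])
    exact Fintype.card_congr ((e1.trans (fiberEquiv k W.1 W.2)).trans (liEquiv e3 k))
  rw [Finset.sum_congr rfl (fun W _ => hfib W), Finset.sum_const, Finset.card_univ, smul_eq_mul]

end Counting

section Concrete

local notation "K2" => ZMod 2

noncomputable instance (t : ℕ) : Fintype (Submodule K2 (Fin t → K2)) := Fintype.ofFinite _

theorem G_mul (t k : ℕ) (hk : k ≤ t) :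
    Nat.card { W : Submodule K2 (Fin t → K2) // finrank K2 W = k } *
        ∏ i : Fin k, (2 ^ k - 2 ^ (i : ℕ)) = ∏ i : Fin k, (2 ^ t - 2 ^ (i : ℕ)) := by
  have h1 : Nat.card { v : Fin k → (Fin t → K2) // LinearIndependent K2 v } =
      ∏ i : Fin k, (2 ^ t - 2 ^ (i : ℕ)) := by
    have := card_linearIndependent (K := K2) (V := Fin t → K2) (k := k)
      (by rw [Module.finrank_fintype_fun_eq_card, Fintype.card_fin]; exact hk)
    simpa [ZMod.card, Module.finrank_fintype_fun_eq_card] using this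
  have h2 : Nat.card { u : Fin k → (Fin k → K2) // LinearIndependent K2 u } =
      ∏ i : Fin k, (2 ^ k - 2 ^ (i : ℕ)) := by
    have := card_linearIndependent (K := K2) (V := Fin k → K2) (k := k)
      (by rw [Module.finrank_fintype_fun_eq_card, Fintype.card_fin])
    simpa [ZMod.card, Module.finrank_fintype_fun_eq_card] using this
  rw [← h1, ← h2]
  exact (stratum_card (K := ZMod 2) (V := Fin t → ZMod 2) k).symm

theorem total_card (t : ℕ) :
    Nat.card (Submodule K2 (Fin t → K2)) =
      ∑ j : Fin (t + 1), Nat.card { W : Submodule K2 (Fin t → K2) // finrank K2 W = (j : ℕ) } := by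
  classical
  have hfin : Module.Finite K2 (Fin t → K2) := Module.Finite.of_finite
  have hle : ∀ W : Submodule K2 (Fin t → K2), finrank K2 W < t + 1 := by
    intro W
    have h := Submodule.finrank_le W
    rw [Module.finrank_fintype_fun_eq_card, Fintype.card_fin] at h
    omega
  let g : Submodule K2 (Fin t → K2) → Fin (t + 1) := fun W => ⟨finrank K2 W, hle W⟩
  letI : ∀ j : Fin (t+1), Fintype { W : Submodule K2 (Fin t → K2) // finrank K2 W = (j : ℕ) } :=
    fun j => Fintype.ofFinite _
  simp only [Nat.card_eq_fintype_card]
  rw [Fintype.card_congr (Equiv.sigmaFiberEquiv g).symm, Fintype.card_sigma]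
  refine Finset.sum_congr rfl fun j _ => ?_
  exact Fintype.card_congr (Equiv.subtypeEquivRight fun W => by
    simp [g, Fin.ext_iff])

end Concrete

open Finset

noncomputable def Pprod (k : ℕ) : ℝ := ∏ j ∈ Finset.range k, (1 - (2:ℝ)⁻¹ ^ (j + 1))

lemma factor_pos (j : ℕ) : 0 < 1 - (2:ℝ)⁻¹ ^ (j + 1) := by
  have h : (2:ℝ)⁻¹ ^ (j + 1) ≤ (2:ℝ)⁻¹ ^ 1 := by
    apply pow_le_pow_of_le_one (by norm_num) (by norm_num); omega
  rw [inv_pow] at h ⊢; nlinarith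

lemma factor_le_one (j : ℕ) : 1 - (2:ℝ)⁻¹ ^ (j + 1) ≤ 1 := by
  have : (0:ℝ) ≤ (2:ℝ)⁻¹ ^ (j+1) := by positivity
  linarith

lemma Pprod_pos (k : ℕ) : 0 < Pprod k :=
  Finset.prod_pos fun j _ => factor_pos j

lemma Pprod_anti {m n : ℕ} (h : m ≤ n) : Pprod n ≤ Pprod m := by
  induction n, h using Nat.le_induction with
  | base => exact le_refl _
  | succ n hmn ih =>
    calc Pprod (n+1) = Pprod n * (1 - (2:ℝ)⁻¹ ^ (n + 1)) := by
          rw [Pprod, Finset.prod_range_succ]; rfl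
      _ ≤ Pprod n * 1 := by
          apply mul_le_mul_of_nonneg_left (factor_le_one n) (Pprod_pos n).le
      _ ≤ Pprod m := by rw [mul_one]; exact ih

lemma Pprod_aux : ∀ k, 5 ≤ k → (9765/34816 : ℝ) * (1 + 2 * (2:ℝ)⁻¹ ^ k) ≤ Pprod k := by
  intro k hk
  induction k, hk using Nat.le_induction with
  | base =>
    rw [Pprod]
    norm_num [Finset.prod_range_succ]
  | succ k hk ih =>
    have hx : (2:ℝ)⁻¹ ^ k ≤ (2:ℝ)⁻¹ ^ 5 := by
      apply pow_le_pow_of_le_one (by norm_num) (by norm_num) hk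
    have hx0 : (0:ℝ) < (2:ℝ)⁻¹ ^ k := by positivity
    have hstep : Pprod (k+1) = Pprod k * (1 - (2:ℝ)⁻¹ ^ (k + 1)) := by
      rw [Pprod, Finset.prod_range_succ]; rfl
    rw [hstep]
    have h2 : (9765/34816 : ℝ) * (1 + 2 * (2:ℝ)⁻¹ ^ (k+1)) ≤
        (9765/34816 : ℝ) * (1 + 2 * (2:ℝ)⁻¹ ^ k) * (1 - (2:ℝ)⁻¹ ^ (k + 1)) := by
      have hpow : (2:ℝ)⁻¹ ^ (k+1) = (2:ℝ)⁻¹ ^ k * 2⁻¹ := by rw [pow_succ]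
      rw [hpow]
      norm_num at hx ⊢
      nlinarith
    exact h2.trans (mul_le_mul_of_nonneg_right ih (factor_pos k).le)

lemma Pprod_ge (k : ℕ) : (9765/34816 : ℝ) ≤ Pprod k := by
  rcases le_or_gt 5 k with h | h
  · refine le_trans ?_ (Pprod_aux k h)
    have : (0:ℝ) < (2:ℝ)⁻¹ ^ k := by positivity
    nlinarith
  · refine le_trans ?_ (Pprod_anti h.le)
    refine le_trans ?_ (Pprod_aux 5 le_rfl)
    norm_num

lemma A_rec (t : ℕ) :
    (∑ j ∈ Finset.range (t + 3), (2:ℝ) ^ (j * (t + 2 - j))) =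
      2 + 2 ^ (t + 1) * ∑ j ∈ Finset.range (t + 1), (2:ℝ) ^ (j * (t - j)) := by
  rw [show t + 3 = (t + 2) + 1 from rfl, Finset.sum_range_succ', Finset.sum_range_succ]
  have h1 : ∀ j ∈ Finset.range (t + 1),
      (2:ℝ) ^ ((j + 1) * (t + 2 - (j + 1))) = 2 ^ (t + 1) * 2 ^ (j * (t - j)) := by
    intro j hj
    rw [Finset.mem_range] at hj
    obtain ⟨d, rfl⟩ : ∃ d, t = j + d := ⟨t - j, by omega⟩
    have e1 : j + d + 2 - (j + 1) = d + 1 := by omega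
    have e2 : j + d - j = d := by omega
    rw [e1, e2, ← pow_add]
    congr 1
    ring
  rw [Finset.sum_congr rfl h1, ← Finset.mul_sum]
  have e3 : (t + 2) * (t + 2 - (t + 2)) = 0 := by simp
  have e4 : (0:ℕ) * (t + 2 - 0) = 0 := by omega
  rw [e3, e4]
  ring

lemma quarter_root : (1.1725:ℝ) ≤ (2:ℝ) ^ ((1:ℝ)/4) := by
  have h41 : ((1.1725:ℝ)) ^ (4:ℕ) ≤ (2:ℝ) := by norm_num
  have h := Real.rpow_le_rpow (by positivity) h41 (by norm_num : (0:ℝ) ≤ 1/4)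
  rwa [← Real.rpow_natCast (1.1725:ℝ) 4, ← Real.rpow_mul (by norm_num),
    show ((4:ℕ):ℝ) * (1/4) = 1 by norm_num, Real.rpow_one] at h

lemma A_le : ∀ t, 6 ≤ t →
    (∑ j ∈ Finset.range (t + 1), (2:ℝ) ^ (j * (t - j))) ≤
      (54/25) * (2:ℝ) ^ (((t:ℝ) * t) / 4) - 2 := by
  intro t
  induction t using Nat.strong_induction_on with
  | _ t IH =>
  intro ht
  rcases eq_or_ne t 6 with rfl | h6
  · have e : ((6:ℕ):ℝ) * ((6:ℕ):ℝ) / 4 = ((9:ℕ):ℝ) := by norm_num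
    rw [e, Real.rpow_natCast]
    norm_num [Finset.sum_range_succ]
  rcases eq_or_ne t 7 with rfl | h7
  · have e : ((7:ℕ):ℝ) * ((7:ℕ):ℝ) / 4 = (12:ℝ) + 1/4 := by norm_num
    rw [e, Real.rpow_add (by norm_num)]
    have h12 : (2:ℝ) ^ ((12:ℝ)) = 4096 := by
      rw [show (12:ℝ) = ((12:ℕ):ℝ) by norm_num, Real.rpow_natCast]; norm_num
    rw [h12]
    have := quarter_root
    have hsum : (∑ j ∈ Finset.range 8, (2:ℝ) ^ (j * (7 - j))) = 10370 := by
      norm_num [Finset.sum_range_succ]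
    rw [hsum]
    nlinarith
  -- step
  obtain ⟨s, rfl⟩ : ∃ s, t = s + 2 := ⟨t - 2, by omega⟩
  have hs : 6 ≤ s := by omega
  have hIH := IH s (by omega) hs
  have hrec := A_rec s
  rw [show s + 2 + 1 = s + 3 from rfl, hrec]
  have hpow : (2:ℝ) ^ (s + 1) = (2:ℝ) ^ (((s:ℝ)) + 1) := by
    rw [show ((s:ℝ) + 1) = (((s+1:ℕ)):ℝ) by push_cast; ring, Real.rpow_natCast]
  have hexp : (((s:ℝ)) + 1) + ((s:ℝ) * s) / 4 = (((s+2:ℕ)):ℝ) * ((s+2:ℕ):ℝ) / 4 := by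
    push_cast; ring
  have h2s : (2:ℝ) ^ 1 ≤ (2:ℝ) ^ (s + 1) := by
    apply pow_le_pow_right₀ (by norm_num); omega
  have hpos : (0:ℝ) < (2:ℝ) ^ (s + 1) := by positivity
  calc 2 + 2 ^ (s + 1) * ∑ j ∈ Finset.range (s + 1), (2:ℝ) ^ (j * (s - j))
      ≤ 2 + 2 ^ (s + 1) * ((54/25) * (2:ℝ) ^ (((s:ℝ) * s) / 4) - 2) := by
        apply add_le_add le_rfl
        exact mul_le_mul_of_nonneg_left hIH hpos.le
    _ = (54/25) * ((2:ℝ) ^ (((s:ℝ)) + 1) * (2:ℝ) ^ (((s:ℝ) * s) / 4)) + 2 - 2 * 2 ^ (s+1) := by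
        rw [← hpow]; ring
    _ ≤ (54/25) * ((2:ℝ) ^ (((s:ℝ)) + 1) * (2:ℝ) ^ (((s:ℝ) * s) / 4)) - 2 := by
        norm_num at h2s; linarith
    _ = (54/25) * (2:ℝ) ^ ((((s+2:ℕ)):ℝ) * ((s+2:ℕ):ℝ) / 4) - 2 := by
        rw [← Real.rpow_add (by norm_num), hexp]

lemma den_lb (k : ℕ) :
    (9765/34816 : ℝ) * 2 ^ (k * k) ≤ ((∏ i : Fin k, (2 ^ k - 2 ^ (i : ℕ)) : ℕ) : ℝ) := by
  have hcast : ((∏ i : Fin k, (2 ^ k - 2 ^ (i : ℕ)) : ℕ) : ℝ) =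
      ∏ i ∈ Finset.range k, ((2:ℝ) ^ k - 2 ^ i) := by
    rw [Fin.prod_univ_eq_prod_range (fun i => (2 ^ k - 2 ^ i : ℕ)) k, Nat.cast_prod]
    refine Finset.prod_congr rfl fun i hi => ?_
    rw [Finset.mem_range] at hi
    rw [Nat.cast_sub (Nat.pow_le_pow_right (by norm_num) hi.le)]
    push_cast; ring
  rw [hcast]
  have hfac : ∀ i ∈ Finset.range k, ((2:ℝ) ^ k - 2 ^ i) = 2 ^ k * (1 - (2:ℝ)⁻¹ ^ (k - i)) := by
    intro i hi
    rw [Finset.mem_range] at hi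
    have h2 : (2:ℝ) ^ k * (2:ℝ)⁻¹ ^ (k - i) = 2 ^ i := by
      rw [inv_pow, mul_inv_eq_iff_eq_mul₀ (by positivity), ← pow_add]
      congr 1; omega
    rw [mul_sub, mul_one, h2]
  rw [Finset.prod_congr rfl hfac, Finset.prod_mul_distrib, Finset.prod_const, Finset.card_range,
    ← pow_mul]
  have hrefl : (∏ i ∈ Finset.range k, (1 - (2:ℝ)⁻¹ ^ (k - i))) = Pprod k := by
    rw [Pprod, ← Finset.prod_range_reflect (fun j => 1 - (2:ℝ)⁻¹ ^ (j + 1)) k]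
    refine Finset.prod_congr rfl fun i hi => ?_
    rw [Finset.mem_range] at hi
    congr 2
    omega
  rw [hrefl, mul_comm ((9765:ℝ)/34816)]
  exact mul_le_mul_of_nonneg_left (Pprod_ge k) (by positivity)

lemma num_ub (t k : ℕ) (hk : k ≤ t) :
    (∏ i : Fin k, (2 ^ t - 2 ^ (i : ℕ)) : ℕ) ≤ 2 ^ (k * k) * 2 ^ (k * (t - k)) := by
  calc (∏ i : Fin k, (2 ^ t - 2 ^ (i : ℕ)) : ℕ)
      ≤ ∏ _i : Fin k, 2 ^ t := Finset.prod_le_prod' fun i _ => Nat.sub_le _ _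
    _ = 2 ^ (t * k) := by rw [Finset.prod_const, Finset.card_univ, Fintype.card_fin, ← pow_mul]
    _ = 2 ^ (k * k) * 2 ^ (k * (t - k)) := by
        rw [← pow_add]
        congr 1
        rw [← Nat.mul_add, Nat.add_sub_cancel' hk, Nat.mul_comm]

lemma G_le (t k : ℕ) (hk : k ≤ t) :
    (Nat.card { W : Submodule (ZMod 2) (Fin t → ZMod 2) // finrank (ZMod 2) W = k } : ℝ) ≤
      (34816/9765) * 2 ^ (k * (t - k)) := by
  set G := Nat.card { W : Submodule (ZMod 2) (Fin t → ZMod 2) // finrank (ZMod 2) W = k }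
  have hGD : (G : ℝ) * ((∏ i : Fin k, (2 ^ k - 2 ^ (i : ℕ)) : ℕ) : ℝ) =
      ((∏ i : Fin k, (2 ^ t - 2 ^ (i : ℕ)) : ℕ) : ℝ) := by
    exact_mod_cast G_mul t k hk
  have hD := den_lb k
  have hN : ((∏ i : Fin k, (2 ^ t - 2 ^ (i : ℕ)) : ℕ) : ℝ) ≤ 2 ^ (k * k) * 2 ^ (k * (t - k)) := by
    exact_mod_cast num_ub t k hk
  have hG0 : (0:ℝ) ≤ (G : ℝ) := Nat.cast_nonneg _
  have key : (G : ℝ) * ((9765/34816) * 2 ^ (k * k)) ≤ 2 ^ (k * k) * 2 ^ (k * (t - k)) := by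
    calc (G : ℝ) * ((9765/34816) * 2 ^ (k * k))
        ≤ (G : ℝ) * ((∏ i : Fin k, (2 ^ k - 2 ^ (i : ℕ)) : ℕ) : ℝ) :=
          mul_le_mul_of_nonneg_left hD hG0
      _ = ((∏ i : Fin k, (2 ^ t - 2 ^ (i : ℕ)) : ℕ) : ℝ) := hGD
      _ ≤ _ := hN
  have hpos : (0:ℝ) < (9765/34816) * 2 ^ (k * k) := by positivity
  have h1 : (34816/9765 : ℝ) * 2 ^ (k * (t - k)) * ((9765/34816) * 2 ^ (k * k)) =
      2 ^ (k * k) * 2 ^ (k * (t - k)) := by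
    have hc : (34816/9765 : ℝ) * (9765/34816) = 1 := by norm_num
    calc (34816/9765 : ℝ) * 2 ^ (k * (t - k)) * ((9765/34816) * 2 ^ (k * k))
        = ((34816/9765 : ℝ) * (9765/34816)) * (2 ^ (k * (t - k)) * 2 ^ (k * k)) := by ring
      _ = 2 ^ (k * k) * 2 ^ (k * (t - k)) := by rw [hc]; ring
  exact (mul_le_mul_iff_of_pos_right hpos).1 (by rw [h1]; exact key)

/-- For every integer t ≥ 12, the number S(t) of linear subspaces of the
vector space GF(2)^t satisfies S(t) ≤ 2^{t(t+1)/4}. -/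
theorem statement_0 (t : ℕ) (ht : 12 ≤ t) :
    (Nat.card (Submodule (ZMod 2) (Fin t → ZMod 2)) : ℝ) ≤
      2 ^ (((t : ℝ) * (t + 1)) / 4) := by
  have hcast : (Nat.card (Submodule (ZMod 2) (Fin t → ZMod 2)) : ℝ) =
      ∑ j : Fin (t + 1),
        (Nat.card { W : Submodule (ZMod 2) (Fin t → ZMod 2) // finrank (ZMod 2) W = (j : ℕ) } : ℝ) := by
    rw [total_card t]; push_cast; rfl
  have hA := A_le t (by omega)
  have hrpos : (0:ℝ) < (2:ℝ) ^ (((t:ℝ) * t) / 4) := Real.rpow_pos_of_pos (by norm_num) _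
  calc (Nat.card (Submodule (ZMod 2) (Fin t → ZMod 2)) : ℝ)
      = ∑ j : Fin (t + 1),
        (Nat.card { W : Submodule (ZMod 2) (Fin t → ZMod 2) // finrank (ZMod 2) W = (j : ℕ) } : ℝ) := hcast
    _ ≤ ∑ j : Fin (t + 1), (34816/9765 : ℝ) * 2 ^ ((j : ℕ) * (t - (j : ℕ))) :=
        Finset.sum_le_sum fun j _ => G_le t j (by omega)
    _ = (34816/9765 : ℝ) * ∑ j ∈ Finset.range (t + 1), (2:ℝ) ^ (j * (t - j)) := by
        rw [← Finset.mul_sum, ← Fin.sum_univ_eq_sum_range (fun j => (2:ℝ) ^ (j * (t - j))) (t+1)]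
    _ ≤ (34816/9765 : ℝ) * ((54/25) * (2:ℝ) ^ (((t:ℝ) * t) / 4) - 2) :=
        mul_le_mul_of_nonneg_left hA (by norm_num)
    _ ≤ 8 * (2:ℝ) ^ (((t:ℝ) * t) / 4) := by nlinarith
    _ = (2:ℝ) ^ ((3:ℝ)) * (2:ℝ) ^ (((t:ℝ) * t) / 4) := by
        rw [show (3:ℝ) = ((3:ℕ):ℝ) by norm_num, Real.rpow_natCast]; norm_num
    _ ≤ (2:ℝ) ^ (((t:ℝ))/4) * (2:ℝ) ^ (((t:ℝ) * t) / 4) := by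
        have h12 : (12:ℝ) ≤ (t:ℝ) := by exact_mod_cast ht
        have : (3:ℝ) ≤ (t:ℝ)/4 := by linarith
        exact mul_le_mul_of_nonneg_right
          ((Real.rpow_le_rpow_left_iff (by norm_num)).2 this) hrpos.le
    _ = 2 ^ (((t : ℝ) * (t + 1)) / 4) := by
        rw [← Real.rpow_add (by norm_num)]
        congr 1
        ring
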